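/- Let f̂ ≥ 1 be an integer, set f = 5·f̂ + 2, and let q̂₀, q̂₁, q̂₅ be positive real numbers. For all integers m̂₀ ≥ 1, m̂₁ ≥ 0, m̂₅ ≥ 0 with m₄ := m̂₀ − 5·m̂₁ − 3·m̂₅ ≥ 0, the term of the orbifold superpotential series, namely exp(iπ·(⌊(−2·m₄ − m̂₅)/5⌋ + m̂₀·(1 − (f+1)/5))) · q₀^(m̂₀) · q₄^(m₄) · q₅^(m̂₅) · Γ((f+1)·m̂₀/5 + (2/5)·m₄ + (1/5)·m̂₅) / [ (m̂₀/5) · Γ(1 + (m̂₀ − m₄ − 3·m̂₅)/5) · Γ(1 + m₄) · Γ(1 + m̂₅) · Γ(1 + (f/5)·m̂₀ − (2/5)·m₄ − (1/5)·m̂₅) ], evaluated at q₄ = q̂₁^(−1/5), q₅ = q̂₁^(−3/5)·q̂₅, q₀ = q̂₁^(1/5)·q̂₀, equals 5 times the corresponding term of the resolution superpotential series, namely exp(iπ·(2·m̂₁ + m̂₅ + (f̂ + 2/5)·m̂₀ + ⌊−2·m̂₀/5⌋)) · q̂₀^(m̂₀) · q̂₁^(m̂₁) · q̂₅^(m̂₅)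 · Γ((f̂+1)·m̂₀ − 2·m̂₁ − m̂₅) / [ m̂₀ · Γ(1 + m̂₀ − 5·m̂₁ − 3·m̂₅) · Γ(1 + m̂₁) · Γ(1 + m̂₅) · Γ(1 + f̂·m̂₀ + 2·m̂₁ + m̂₅) ]. -/
import Mathlib


open Real Complex

/-- The general term of the orbifold superpotential series `W_f^{X,L}` for
`X = [ℂ³/ℤ₅(1,1,3)]` at framing `f`, with Kähler parameters `q₀, q₄, q₅` (positive reals)
and indices `(m₀, m₄, m₅)`.  Here `(−1)^x` is interpreted as `exp(iπ·x)` and `Γ` is the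
complex Gamma function. -/
noncomputable def orbSuperTerm (f : ℤ) (q0 q4 q5 : ℝ) (m0 m4 m5 : ℤ) : ℂ :=
  Complex.exp ((Real.pi : ℂ) * Complex.I *
      ((⌊((-2 * m4 - m5 : ℤ) : ℚ) / 5⌋ : ℂ) + (m0 : ℂ) * (1 - ((f : ℂ) + 1) / 5))) *
    ((q0 ^ m0 * q4 ^ m4 * q5 ^ m5 : ℝ) : ℂ) *
    Complex.Gamma (((f : ℂ) + 1) * m0 / 5 + 2 / 5 * m4 + 1 / 5 * m5) /
    ((m0 : ℂ) / 5 * Complex.Gamma (1 + ((m0 : ℂ) - m4 - 3 * m5) / 5) *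
      Complex.Gamma (1 + (m4 : ℂ)) * Complex.Gamma (1 + (m5 : ℂ)) *
      Complex.Gamma (1 + (f : ℂ) / 5 * m0 - 2 / 5 * m4 - 1 / 5 * m5))

/-- The general term of the resolution superpotential series `W_f̂^{X̂,L̂}` for the toric
crepant resolution of `[ℂ³/ℤ₅(1,1,3)]` at framing `f̂`, with Kähler parameters
`q̂₀, q̂₁, q̂₅` (positive reals) and indices `(m̂₀, m̂₁, m̂₅)`. -/
noncomputable def resSuperTerm (fh : ℤ) (qh0 qh1 qh5 : ℝ) (m0 m1 m5 : ℤ) : ℂ :=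
  Complex.exp ((Real.pi : ℂ) * Complex.I *
      ((2 * m1 + m5 : ℂ) + ((fh : ℂ) + 2 / 5) * m0 + (⌊((-2 * m0 : ℤ) : ℚ) / 5⌋ : ℂ))) *
    ((qh0 ^ m0 * qh1 ^ m1 * qh5 ^ m5 : ℝ) : ℂ) *
    Complex.Gamma (((fh : ℂ) + 1) * m0 - 2 * m1 - m5) /
    ((m0 : ℂ) * Complex.Gamma (1 + (m0 : ℂ) - 5 * m1 - 3 * m5) *
      Complex.Gamma (1 + (m1 : ℂ)) * Complex.Gamma (1 + (m5 : ℂ)) *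
      Complex.Gamma (1 + (fh : ℂ) * m0 + 2 * m1 + m5))

/-- Term-by-term quantum McKay correspondence for `[ℂ³/ℤ₅(1,1,3)]`: with `f̂ ≥ 1`,
`f = 5·f̂ + 2`, positive Kähler parameters `q̂₀, q̂₁, q̂₅`, and indices `m̂₀ ≥ 1`,
`m̂₁, m̂₅ ≥ 0` with `m₄ = m̂₀ − 5·m̂₁ − 3·m̂₅ ≥ 0`, the orbifold superpotential term at
`(m̂₀, m₄, m̂₅)` evaluated at `q₄ = q̂₁^(−1/5)`, `q₅ = q̂₁^(−3/5)·q̂₅`, `q₀ = q̂₁^(1/5)·q̂₀`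
equals `5` times the resolution superpotential term at `(m̂₀, m̂₁, m̂₅)`. -/
theorem superpotential_terms_correspondence (fh : ℤ) (hfh : 1 ≤ fh) (f : ℤ)
    (hf : f = 5 * fh + 2) (qh0 qh1 qh5 : ℝ) (h0 : 0 < qh0) (h1 : 0 < qh1) (h5 : 0 < qh5)
    (m0 m1 m5 : ℤ) (hm0 : 1 ≤ m0) (hm1 : 0 ≤ m1) (hm5 : 0 ≤ m5)
    (hm4 : 0 ≤ m0 - 5 * m1 - 3 * m5) :
    orbSuperTerm f (qh1 ^ ((1 : ℝ) / 5) * qh0) (qh1 ^ (-(1 : ℝ) / 5))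
        (qh1 ^ (-(3 : ℝ) / 5) * qh5) m0 (m0 - 5 * m1 - 3 * m5) m5 =
      5 * resSuperTerm fh qh0 qh1 qh5 m0 m1 m5 := by
  subst hf
  unfold orbSuperTerm resSuperTerm
  -- floor identity
  have hfl : ⌊((-2 * (m0 - 5 * m1 - 3 * m5) - m5 : ℤ) : ℚ) / 5⌋
      = 2 * m1 + m5 + ⌊((-2 * m0 : ℤ) : ℚ) / 5⌋ := by
    have h : ((-2 * (m0 - 5 * m1 - 3 * m5) - m5 : ℤ) : ℚ) / 5
        = ((-2 * m0 : ℤ) : ℚ) / 5 + ((2 * m1 + m5 : ℤ) : ℚ) := by push_cast; ring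
    rw [h, Int.floor_add_intCast]; omega
  rw [hfl]
  -- exp factor
  have hexp : Complex.exp ((Real.pi : ℂ) * Complex.I *
      (((2 * m1 + m5 + ⌊((-2 * m0 : ℤ) : ℚ) / 5⌋ : ℤ) : ℂ) +
        (m0 : ℂ) * (1 - (((5 * fh + 2 : ℤ) : ℂ) + 1) / 5))) =
      Complex.exp ((Real.pi : ℂ) * Complex.I *
      ((2 * m1 + m5 : ℂ) + ((fh : ℂ) + 2 / 5) * m0 + (⌊((-2 * m0 : ℤ) : ℚ) / 5⌋ : ℂ))) := by
    rw [show (Real.pi : ℂ) * Complex.I *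
      (((2 * m1 + m5 + ⌊((-2 * m0 : ℤ) : ℚ) / 5⌋ : ℤ) : ℂ) +
        (m0 : ℂ) * (1 - (((5 * fh + 2 : ℤ) : ℂ) + 1) / 5)) =
      ((-fh * m0 : ℤ) : ℂ) * (2 * (Real.pi : ℂ) * Complex.I) +
      (Real.pi : ℂ) * Complex.I *
      ((2 * m1 + m5 : ℂ) + ((fh : ℂ) + 2 / 5) * m0 + (⌊((-2 * m0 : ℤ) : ℚ) / 5⌋ : ℂ)) from by
        push_cast; ring]
    rw [Complex.exp_add, Complex.exp_int_mul_two_pi_mul_I, one_mul]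
  rw [hexp]
  -- Kähler factor
  have hrp : ∀ (r : ℝ) (n : ℤ), (qh1 ^ r) ^ n = qh1 ^ (r * n) := by
    intro r n
    rw [← Real.rpow_intCast (qh1 ^ r) n, ← Real.rpow_mul h1.le]
  have hK : ((qh1 ^ ((1 : ℝ) / 5) * qh0) ^ m0 * (qh1 ^ (-(1 : ℝ) / 5)) ^ (m0 - 5 * m1 - 3 * m5) *
      (qh1 ^ (-(3 : ℝ) / 5) * qh5) ^ m5 : ℝ) = qh0 ^ m0 * qh1 ^ m1 * qh5 ^ m5 := by
    rw [mul_zpow, mul_zpow, hrp, hrp, hrp]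
    rw [show ((1 : ℝ) / 5 * m0) = (1 : ℝ)/5 * m0 from rfl]
    rw [← Real.rpow_intCast qh1 m1,
      show ((m1 : ℤ) : ℝ) = (1 : ℝ)/5 * m0 + (-(1:ℝ)/5 * ((m0 - 5*m1 - 3*m5 : ℤ) : ℝ)) + (-(3:ℝ)/5 * m5) from by push_cast; ring,
      Real.rpow_add h1, Real.rpow_add h1]
    ring
  rw [hK]
  -- Gamma arguments
  rw [show (((5 * fh + 2 : ℤ) : ℂ) + 1) * m0 / 5 + 2 / 5 * ((m0 - 5 * m1 - 3 * m5 : ℤ) : ℂ) + 1 / 5 * m5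
      = ((fh : ℂ) + 1) * m0 - 2 * m1 - m5 from by push_cast; ring]
  rw [show (1 + ((m0 : ℂ) - ((m0 - 5 * m1 - 3 * m5 : ℤ) : ℂ) - 3 * m5) / 5)
      = 1 + (m1 : ℂ) from by push_cast; ring]
  rw [show (1 + ((m0 - 5 * m1 - 3 * m5 : ℤ) : ℂ)) = 1 + (m0 : ℂ) - 5 * m1 - 3 * m5 from by push_cast; ring]
  rw [show (1 + ((5 * fh + 2 : ℤ) : ℂ) / 5 * m0 - 2 / 5 * ((m0 - 5 * m1 - 3 * m5 : ℤ) : ℂ) - 1 / 5 * m5)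
      = 1 + (fh : ℂ) * m0 + 2 * m1 + m5 from by push_cast; ring]
  ring
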